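/- For every θ̄ ∈ ℝ, every t > 0, and all points x₁ ≠ x₂ ∈ ℝ² and x₁' ≠ x₂' ∈ ℝ², the quantity W^{θ̄}(t,(x₁,x₂),(x₁',x₂')) is finite, i.e. the fourfold iterated integral defining it converges. -/

import Mathlib

open MeasureTheory Set ENNReal

noncomputable section

abbrev Plane := EuclideanSpace ℝ (Fin 2)

/-- The 2d heat kernel `p(t,x) = (2πt)⁻¹ exp(−|x|²/(2t))`. -/
def heatK (t : ℝ) (x : Plane) : ℝ :=
  (2 * Real.pi * t)⁻¹ * Real.exp (-‖x‖ ^ 2 / (2 * t))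

/-- `j^{θ̄}(t) = e^{θ̄ t} ∫₀^∞ u^{t−1}/Γ(u) du`. -/
def jfn (θ : ℝ) (t : ℝ) : ℝ :=
  Real.exp (θ * t) * ∫ u in Ioi (0 : ℝ), u ^ (t - 1) / Real.Gamma u

/-- The kernel `W^{θ̄}(t,(x₁,x₂),(x₁',x₂'))`, defined as a fourfold iterated integral with
values in `[0,∞]`. Here `u'' = t − u − u'`. -/
def Wker (θ t : ℝ) (x₁ x₂ x₁' x₂' : Plane) : ℝ≥0∞ :=
  ∫⁻ u in Ioo (0 : ℝ) t, ∫⁻ u' in Ioo (0 : ℝ) (t - u), ∫⁻ y : Plane, ∫⁻ y' : Plane,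
    ENNReal.ofReal (heatK u (x₁ - y) * heatK u (x₂ - y) *
      (4 * Real.pi * jfn θ u' * heatK (u' / 2) (y - y')) *
      (heatK (t - u - u') (y' - x₁') * heatK (t - u - u') (y' - x₂')))

/-- The pairing `N_{g,g'}(θ̄) = ∫ g(x₁)g(x₂) W^{θ̄}(1,(x₁,x₂),(x₁',x₂')) g'(x₁')g'(x₂') dx`. -/
def Npair (g g' : Plane → ℝ) (θ : ℝ) : ℝ≥0∞ :=
  ∫⁻ x₁ : Plane, ∫⁻ x₂ : Plane, ∫⁻ x₁' : Plane, ∫⁻ x₂' : Plane,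
    ENNReal.ofReal (g x₁ * g x₂) * Wker θ 1 x₁ x₂ x₁' x₂' *
      ENNReal.ofReal (g' x₁' * g' x₂')

section Helpers

lemma gauss_integrable {b : ℝ} (hb : 0 < b) :
    Integrable (fun v : Plane => Real.exp (- b * ‖v‖^2)) := by
  have := GaussianFourier.integrable_cexp_neg_mul_sq_norm_add (V := Plane) (b := (b:ℂ))
    (by simpa using hb) 0 0
  have h2 := this.norm
  refine h2.congr (Filter.Eventually.of_forall fun v => ?_)
  simp only [Complex.norm_exp]
  norm_num
  left; norm_cast

lemma heatK_nonneg {s : ℝ} (hs : 0 < s) (x : Plane) : 0 ≤ heatK s x := by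
  unfold heatK; positivity

lemma heatK_le {s : ℝ} (hs : 0 < s) (x : Plane) : heatK s x ≤ (2 * Real.pi * s)⁻¹ := by
  unfold heatK
  have h1 : Real.exp (-‖x‖ ^ 2 / (2 * s)) ≤ 1 := by
    rw [Real.exp_le_one_iff]
    have : (0:ℝ) ≤ ‖x‖ ^ 2 / (2 * s) := by positivity
    rw [neg_div]; linarith
  calc (2 * Real.pi * s)⁻¹ * Real.exp (-‖x‖ ^ 2 / (2 * s)) ≤ (2 * Real.pi * s)⁻¹ * 1 :=
        mul_le_mul_of_nonneg_left h1 (by positivity)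
    _ = (2 * Real.pi * s)⁻¹ := mul_one _

lemma heatK_symm (s : ℝ) (a b : Plane) : heatK s (a - b) = heatK s (b - a) := by
  unfold heatK; rw [norm_sub_rev]

lemma heatK_cont (s : ℝ) : Continuous fun x : Plane => heatK s x := by
  unfold heatK
  fun_prop

lemma heatK_eq (s : ℝ) (hs : 0 < s) (x : Plane) :
    heatK s x = (2 * Real.pi * s)⁻¹ * Real.exp (-(2*s)⁻¹ * ‖x‖ ^ 2) := by
  unfold heatK
  congr 2
  field_simp

lemma heatK_integrable {s : ℝ} (hs : 0 < s) : Integrable (fun x : Plane => heatK s x) := by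
  have : (fun x : Plane => heatK s x)
      = fun x : Plane => (2 * Real.pi * s)⁻¹ * Real.exp (-(2*s)⁻¹ * ‖x‖ ^ 2) := by
    funext x; exact heatK_eq s hs x
  rw [this]
  exact (gauss_integrable (by positivity)).const_mul _

lemma integral_heatK {s : ℝ} (hs : 0 < s) : ∫ x : Plane, heatK s x = 1 := by
  simp_rw [heatK_eq s hs]
  rw [MeasureTheory.integral_const_mul,
    GaussianFourier.integral_rexp_neg_mul_sq_norm (by positivity : (0:ℝ) < (2*s)⁻¹)]
  have h2 : Module.finrank ℝ Plane = 2 := by simp [finrank_euclideanSpace]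
  rw [h2]
  rw [show ((2:ℕ):ℝ)/2 = (1:ℝ) by norm_num]
  rw [Real.rpow_one]
  have hπ := Real.pi_pos
  field_simp

lemma lintegral_heatK {s : ℝ} (hs : 0 < s) (c : Plane) :
    ∫⁻ y : Plane, ENNReal.ofReal (heatK s (y - c)) = 1 := by
  rw [lintegral_sub_right_eq_self (fun y => ENNReal.ofReal (heatK s y)) c]
  rw [← ofReal_integral_eq_lintegral_ofReal (heatK_integrable hs)
    (Filter.Eventually.of_forall fun x => by unfold heatK; positivity)]
  rw [integral_heatK hs]; simp

lemma lintegral_heatK' {s : ℝ} (hs : 0 < s) (c : Plane) :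
    ∫⁻ y : Plane, ENNReal.ofReal (heatK s (c - y)) = 1 := by
  simp_rw [heatK_symm s c]
  exact lintegral_heatK hs c

lemma heatK_le' {s t : ℝ} (ht : 0 < t) (hs : t/6 ≤ s) (x : Plane) :
    heatK s x ≤ 3 / (Real.pi * t) := by
  have hπ := Real.pi_pos
  have hs0 : 0 < s := lt_of_lt_of_le (by linarith) hs
  calc heatK s x ≤ (2 * Real.pi * s)⁻¹ := heatK_le hs0 x
    _ ≤ (2 * Real.pi * (t/6))⁻¹ := by
        apply inv_anti₀ (by positivity)
        apply mul_le_mul_of_nonneg_left hs (by positivity)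
    _ = 3 / (Real.pi * t) := by field_simp; ring

lemma heat_prod_le {u : ℝ} (hu : 0 < u) {a b : Plane} (hab : a ≠ b) :
    heatK u a * heatK u b ≤ 8 / (Real.pi * ‖a - b‖ ^ 2) * heatK (2 * u) a := by
  have hπ := Real.pi_pos
  have hD : (0:ℝ) < ‖a - b‖ ^ 2 := by
    have h0 : (0:ℝ) < ‖a - b‖ := norm_pos_iff.2 (sub_ne_zero.2 hab)
    positivity
  set D := ‖a - b‖ ^ 2 with hDdef
  set A := ‖a‖ ^ 2 with hAdef
  set B := ‖b‖ ^ 2 with hBdef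
  have hA : 0 ≤ A := by positivity
  have hB : 0 ≤ B := by positivity
  have hDle : D ≤ 2 * (A + B) := by
    have h1 : ‖a - b‖ ≤ ‖a‖ + ‖b‖ := norm_sub_le a b
    have h2 : (0:ℝ) ≤ ‖a - b‖ := norm_nonneg _
    nlinarith [sq_nonneg (‖a‖ - ‖b‖), norm_nonneg a, norm_nonneg b]
  unfold heatK
  have key : Real.exp (-(A + B) / (2 * u) + A / (2 * (2*u)))
      ≤ Real.exp (- D / (8 * u)) := by
    apply Real.exp_le_exp.2
    have hcoef : -(A+B)/2 + A/4 ≤ -D/8 := by nlinarith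
    calc -(A + B) / (2 * u) + A / (2 * (2 * u)) = (-(A+B)/2 + A/4) * u⁻¹ := by
          field_simp; ring
      _ ≤ (-D/8) * u⁻¹ := mul_le_mul_of_nonneg_right hcoef (by positivity)
      _ = -D/(8*u) := by field_simp
  have expo : Real.exp (-A / (2*u)) * Real.exp (-B / (2*u))
      = Real.exp (-(A+B)/(2*u) + A/(2*(2*u))) * Real.exp (-A/(2*(2*u))) := by
    rw [← Real.exp_add, ← Real.exp_add]
    congr 1
    field_simp
    ring
  have hbound : Real.exp (- D / (8 * u)) ≤ 8 * u / D := by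
    have hx : (0:ℝ) < D / (8 * u) := by positivity
    have := Real.add_one_le_exp (D / (8*u))
    have h2 : D / (8*u) ≤ Real.exp (D / (8*u)) := by linarith
    rw [neg_div, Real.exp_neg]
    rw [inv_le_comm₀ (Real.exp_pos _) (by positivity)]
    calc (8*u/D)⁻¹ = D/(8*u) := by rw [inv_div]
      _ ≤ Real.exp (D/(8*u)) := h2
  calc (2 * Real.pi * u)⁻¹ * Real.exp (-A / (2 * u)) * ((2 * Real.pi * u)⁻¹ * Real.exp (-B / (2 * u)))
      = ((2*Real.pi*u)⁻¹ * Real.exp (-(A+B)/(2*u) + A/(2*(2*u)))) * ((2*Real.pi*u)⁻¹ * Real.exp (-A/(2*(2*u)))) := by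
        rw [show (2 * Real.pi * u)⁻¹ * Real.exp (-A / (2 * u)) * ((2 * Real.pi * u)⁻¹ * Real.exp (-B / (2 * u))) = (2 * Real.pi * u)⁻¹ * (2 * Real.pi * u)⁻¹ * (Real.exp (-A / (2 * u)) * Real.exp (-B / (2 * u))) by ring, expo]
        ring
    _ ≤ ((2*Real.pi*u)⁻¹ * (8*u/D)) * ((2*Real.pi*u)⁻¹ * Real.exp (-A/(2*(2*u)))) := by
        apply mul_le_mul_of_nonneg_right _ (by positivity)
        apply mul_le_mul_of_nonneg_left (le_trans key hbound) (by positivity)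
    _ = 8 / (Real.pi * D) * ((2 * Real.pi * (2*u))⁻¹ * Real.exp (-A / (2 * (2*u)))) := by
        field_simp

lemma gamma_lb {s : ℝ} (hs : 1 ≤ s) : Real.exp (-4) * 3 ^ (s - 1) ≤ Real.Gamma s := by
  have hs0 : (0:ℝ) < s := by linarith
  rw [Real.Gamma_eq_integral hs0]
  have hsub : Ioc (3:ℝ) 4 ⊆ Ioi (0:ℝ) := fun x hx => lt_trans (by norm_num) hx.1
  have h1 : Real.exp (-4) * 3 ^ (s - 1)
      ≤ ∫ x in Ioc (3:ℝ) 4, Real.exp (-x) * x ^ (s - 1) := by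
    have hle : ∀ x ∈ Ioc (3:ℝ) 4, Real.exp (-4) * 3 ^ (s-1) ≤ Real.exp (-x) * x ^ (s - 1) := by
      intro x hx
      apply mul_le_mul
      · exact Real.exp_le_exp.2 (by linarith [hx.2])
      · exact Real.rpow_le_rpow (by norm_num) (le_of_lt hx.1) (by linarith)
      · positivity
      · positivity
    calc Real.exp (-4) * 3 ^ (s - 1)
        = ∫ _x in Ioc (3:ℝ) 4, Real.exp (-4) * 3 ^ (s-1) := by
          rw [setIntegral_const]
          simp [Real.volume_Ioc]
          norm_num
      _ ≤ ∫ x in Ioc (3:ℝ) 4, Real.exp (-x) * x ^ (s - 1) := by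
          apply setIntegral_mono_on (integrableOn_const (by simp [Real.volume_Ioc]))
            ((Real.GammaIntegral_convergent hs0).mono_set hsub) measurableSet_Ioc hle
  refine le_trans h1 ?_
  apply setIntegral_mono_set (Real.GammaIntegral_convergent hs0) ?_
    (HasSubset.Subset.eventuallyLE hsub)
  filter_upwards [ae_restrict_mem measurableSet_Ioi] with x hx
  have hx0 : (0:ℝ) < x := hx
  positivity

lemma jfn_nonneg (θ s : ℝ) : 0 ≤ jfn θ s := by
  unfold jfn
  apply mul_nonneg (Real.exp_nonneg _)
  apply setIntegral_nonneg measurableSet_Ioi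
  intro u hu
  have h1 : (0:ℝ) < u := hu
  have h2 := Real.Gamma_pos_of_pos h1
  positivity

lemma jfn_le {θ t u' : ℝ} (ht : 0 < t) (h0 : 0 < u') (hlt : u' < t) :
    jfn θ u' ≤ Real.exp (|θ| * t) * (Real.exp 4 + Real.exp 5 * Real.Gamma (t + 1)) := by
  have hΓt : 0 < Real.Gamma (t+1) := Real.Gamma_pos_of_pos (by linarith)
  have hM0 : (0:ℝ) ≤ Real.exp 4 + Real.exp 5 * Real.Gamma (t + 1) := by positivity
  unfold jfn
  have hexp : Real.exp (θ * u') ≤ Real.exp (|θ| * t) := by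
    apply Real.exp_le_exp.2
    calc θ * u' ≤ |θ| * u' := mul_le_mul_of_nonneg_right (le_abs_self θ) h0.le
      _ ≤ |θ| * t := mul_le_mul_of_nonneg_left hlt.le (abs_nonneg θ)
  set f : ℝ → ℝ := fun u => u ^ (u' - 1) / Real.Gamma u with hf
  have hfnn : ∀ u ∈ Ioi (0:ℝ), 0 ≤ f u := by
    intro u hu
    have h1 : (0:ℝ) < u := hu
    have h2 := Real.Gamma_pos_of_pos h1
    positivity
  have hfm : AEStronglyMeasurable f ((volume : Measure ℝ).restrict (Ioi 0)) := by
    refine ContinuousOn.aestronglyMeasurable ?_ measurableSet_Ioi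
    apply ContinuousOn.div
    · exact ContinuousOn.rpow_const continuousOn_id fun x hx => Or.inl (ne_of_gt hx)
    · intro x hx
      exact (Real.differentiableAt_Gamma (fun m => by
        have h1 : (0:ℝ) < x := hx
        have h2 : (0:ℝ) ≤ m := Nat.cast_nonneg m
        intro h; rw [h] at h1; linarith)).continuousAt.continuousWithinAt
    · intro x hx
      exact ne_of_gt (Real.Gamma_pos_of_pos hx)
  have hIeq : ∫ u in Ioi (0:ℝ), f u
      = (∫⁻ u in Ioi (0:ℝ), ENNReal.ofReal (f u)).toReal := by
    rw [integral_eq_lintegral_of_nonneg_ae]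
    · filter_upwards [ae_restrict_mem measurableSet_Ioi] with x hx using hfnn x hx
    · exact hfm
  -- bound the lintegral
  have hsplit : (Ioc (0:ℝ) 1) ∪ (Ioi 1) = Ioi (0:ℝ) := Ioc_union_Ioi_eq_Ioi zero_le_one
  have hL : (∫⁻ u in Ioi (0:ℝ), ENNReal.ofReal (f u))
      ≤ ENNReal.ofReal (Real.exp 4 + Real.exp 5 * Real.Gamma (t + 1)) := by
    rw [← hsplit, lintegral_union measurableSet_Ioi (Ioc_disjoint_Ioi le_rfl)]
    have hL1 : (∫⁻ u in Ioc (0:ℝ) 1, ENNReal.ofReal (f u)) ≤ ENNReal.ofReal (Real.exp 4) := by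
      calc (∫⁻ u in Ioc (0:ℝ) 1, ENNReal.ofReal (f u))
          ≤ ∫⁻ _u in Ioc (0:ℝ) 1, ENNReal.ofReal (Real.exp 4) := by
            apply setLIntegral_mono' measurableSet_Ioc
            intro u hu
            apply ENNReal.ofReal_le_ofReal
            have hu0 : (0:ℝ) < u := hu.1
            have hΓ1 : Real.exp (-4) * 3 ^ u ≤ Real.Gamma (u+1) := by
              have := gamma_lb (s := u+1) (by linarith)
              simpa using this
            have h3u : (1:ℝ) ≤ 3 ^ u := by
              rw [show (1:ℝ) = 3 ^ (0:ℝ) by simp]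
              exact Real.rpow_le_rpow_of_exponent_le (by norm_num) hu0.le
            have hΓ2 : Real.exp (-4) ≤ Real.Gamma (u+1) := by nlinarith [Real.exp_pos (-4:ℝ)]
            have hfu : f u = u ^ u' / Real.Gamma (u+1) := by
              rw [hf]
              simp only
              rw [Real.Gamma_add_one (ne_of_gt hu0)]
              rw [show u ^ u' = u ^ (u'-1) * u by
                rw [← Real.rpow_add_one (ne_of_gt hu0)]; ring_nf]
              field_simp
            rw [hfu]
            have hnum : u ^ u' ≤ 1 := Real.rpow_le_one hu0.le hu.2 h0.le
            calc u ^ u' / Real.Gamma (u+1) ≤ 1 / Real.exp (-4) := by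
                  apply div_le_div₀ (by norm_num) hnum (Real.exp_pos _) hΓ2
              _ = Real.exp 4 := by rw [Real.exp_neg]; simp
        _ = ENNReal.ofReal (Real.exp 4) := by
            rw [setLIntegral_const]
            simp [Real.volume_Ioc]
    have hL2 : (∫⁻ u in Ioi (1:ℝ), ENNReal.ofReal (f u))
        ≤ ENNReal.ofReal (Real.exp 5 * Real.Gamma (t+1)) := by
      have hstep : ∀ u ∈ Ioi (1:ℝ), ENNReal.ofReal (f u)
          ≤ ENNReal.ofReal (Real.exp 5 * (Real.exp (-u) * u ^ ((t+1) - 1))) := by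
        intro u hu
        have hu1 : (1:ℝ) < u := hu
        have hu0 : (0:ℝ) < u := by linarith
        apply ENNReal.ofReal_le_ofReal
        have hnum : u ^ (u'-1) ≤ u ^ t :=
          Real.rpow_le_rpow_of_exponent_le hu1.le (by linarith)
        have hden : Real.exp (u - 5) ≤ Real.Gamma u := by
          have h1 := gamma_lb (s := u) hu1.le
          have h2 : Real.exp (u-1) ≤ 3 ^ (u-1) := by
            rw [Real.rpow_def_of_pos (by norm_num : (0:ℝ) < 3)]
            apply Real.exp_le_exp.2
            have hlog : (1:ℝ) ≤ Real.log 3 := by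
              rw [Real.le_log_iff_exp_le (by norm_num)]
              exact le_trans (le_of_lt Real.exp_one_lt_d9) (by norm_num)
            nlinarith
          calc Real.exp (u - 5) = Real.exp (-4) * Real.exp (u-1) := by
                rw [← Real.exp_add]; ring_nf
            _ ≤ Real.exp (-4) * 3 ^ (u-1) :=
                mul_le_mul_of_nonneg_left h2 (Real.exp_nonneg _)
            _ ≤ Real.Gamma u := h1
        have hΓu : 0 < Real.Gamma u := Real.Gamma_pos_of_pos hu0
        calc f u = u ^ (u'-1) / Real.Gamma u := rfl
          _ ≤ u ^ t / Real.exp (u - 5) :=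
              div_le_div₀ (Real.rpow_nonneg hu0.le _) hnum (Real.exp_pos _) hden
          _ = Real.exp 5 * (Real.exp (-u) * u ^ ((t+1)-1)) := by
              rw [add_sub_cancel_right, Real.exp_sub, Real.exp_neg]
              field_simp
      calc (∫⁻ u in Ioi (1:ℝ), ENNReal.ofReal (f u))
          ≤ ∫⁻ u in Ioi (1:ℝ), ENNReal.ofReal (Real.exp 5 * (Real.exp (-u) * u ^ ((t+1) - 1))) :=
            setLIntegral_mono' measurableSet_Ioi hstep
        _ ≤ ∫⁻ u in Ioi (0:ℝ), ENNReal.ofReal (Real.exp 5 * (Real.exp (-u) * u ^ ((t+1) - 1))) :=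
            lintegral_mono_set (Ioi_subset_Ioi zero_le_one)
        _ = ENNReal.ofReal (Real.exp 5 * Real.Gamma (t+1)) := by
            have hint := Real.GammaIntegral_convergent (by linarith : (0:ℝ) < t + 1)
            rw [← ofReal_integral_eq_lintegral_ofReal (hint.const_mul _) ?_]
            · rw [MeasureTheory.integral_const_mul, ← Real.Gamma_eq_integral (by linarith : (0:ℝ) < t+1)]
            · filter_upwards [ae_restrict_mem measurableSet_Ioi] with x hx
              have hx0 : (0:ℝ) < x := hx
              positivity
    calc _ ≤ ENNReal.ofReal (Real.exp 4) + ENNReal.ofReal (Real.exp 5 * Real.Gamma (t+1)) :=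
          add_le_add hL1 hL2
      _ = _ := by rw [← ENNReal.ofReal_add (Real.exp_nonneg _) (by positivity)]
  have hI : ∫ u in Ioi (0:ℝ), f u ≤ Real.exp 4 + Real.exp 5 * Real.Gamma (t + 1) := by
    rw [hIeq]
    exact ENNReal.toReal_le_of_le_ofReal hM0 hL
  have hInn : 0 ≤ ∫ u in Ioi (0:ℝ), f u := setIntegral_nonneg measurableSet_Ioi hfnn
  calc Real.exp (θ * u') * ∫ u in Ioi (0:ℝ), f u
      ≤ Real.exp (|θ| * t) * (Real.exp 4 + Real.exp 5 * Real.Gamma (t + 1)) :=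
        mul_le_mul hexp hI hInn (Real.exp_nonneg _)

lemma meas_of_heatK (s : ℝ) {g : Plane × Plane → Plane} (hg : Continuous g) :
    Measurable fun p : Plane × Plane => ENNReal.ofReal (heatK s (g p)) :=
  (((heatK_cont s).comp hg).measurable).ennreal_ofReal

lemma double_le {t : ℝ} (ht : 0 < t) {s₁ s₂ s₃ : ℝ} (h₁ : 0 < s₁) (h₂ : 0 < s₂) (h₃ : 0 < s₃)
    (hmax : t/6 ≤ s₁ ∨ t/6 ≤ s₂ ∨ t/6 ≤ s₃) (a c : Plane) :
    (∫⁻ y : Plane, ∫⁻ y' : Plane,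
      ENNReal.ofReal (heatK s₁ (a - y)) * ENNReal.ofReal (heatK s₂ (y - y')) *
        ENNReal.ofReal (heatK s₃ (y' - c)))
      ≤ ENNReal.ofReal (3 / (Real.pi * t)) := by
  have hπ := Real.pi_pos
  set B : ℝ≥0∞ := ENNReal.ofReal (3 / (Real.pi * t)) with hB
  have hBne : B ≠ ⊤ := ENNReal.ofReal_ne_top
  rcases hmax with hm | hm | hm
  · -- bound the first kernel, swap integrals
    have step1 : (∫⁻ y : Plane, ∫⁻ y' : Plane,
        ENNReal.ofReal (heatK s₁ (a - y)) * ENNReal.ofReal (heatK s₂ (y - y')) *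
          ENNReal.ofReal (heatK s₃ (y' - c)))
        ≤ ∫⁻ y : Plane, ∫⁻ y' : Plane,
          B * (ENNReal.ofReal (heatK s₂ (y - y')) * ENNReal.ofReal (heatK s₃ (y' - c))) := by
      apply lintegral_mono; intro y; apply lintegral_mono; intro y'
      simp only [mul_assoc]
      exact mul_le_mul_left (ENNReal.ofReal_le_ofReal (heatK_le' ht hm _)) _
    have step2 : (∫⁻ y : Plane, ∫⁻ y' : Plane,
          B * (ENNReal.ofReal (heatK s₂ (y - y')) * ENNReal.ofReal (heatK s₃ (y' - c))))
        = B * ∫⁻ y : Plane, ∫⁻ y' : Plane,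
          ENNReal.ofReal (heatK s₂ (y - y')) * ENNReal.ofReal (heatK s₃ (y' - c)) := by
      simp_rw [lintegral_const_mul' B _ hBne]
    have hswap : (∫⁻ y : Plane, ∫⁻ y' : Plane,
          ENNReal.ofReal (heatK s₂ (y - y')) * ENNReal.ofReal (heatK s₃ (y' - c)))
        = ∫⁻ y' : Plane, ∫⁻ y : Plane,
          ENNReal.ofReal (heatK s₂ (y - y')) * ENNReal.ofReal (heatK s₃ (y' - c)) := by
      apply lintegral_lintegral_swap
      exact ((meas_of_heatK s₂ (continuous_fst.sub continuous_snd)).mul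
        (meas_of_heatK s₃ (continuous_snd.sub continuous_const))).aemeasurable
    have step3 : (∫⁻ y' : Plane, ∫⁻ y : Plane,
          ENNReal.ofReal (heatK s₂ (y - y')) * ENNReal.ofReal (heatK s₃ (y' - c))) = 1 := by
      have h4 : ∀ y' : Plane, (∫⁻ y : Plane,
          ENNReal.ofReal (heatK s₂ (y - y')) * ENNReal.ofReal (heatK s₃ (y' - c)))
          = ENNReal.ofReal (heatK s₃ (y' - c)) := by
        intro y'
        rw [lintegral_mul_const' _ _ ENNReal.ofReal_ne_top, lintegral_heatK h₂ y', one_mul]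
      simp_rw [h4]
      exact lintegral_heatK h₃ c
    calc _ ≤ _ := step1
      _ = B * 1 := by rw [step2, hswap, step3]
      _ = B := mul_one B
  · -- bound the middle kernel
    have step1 : (∫⁻ y : Plane, ∫⁻ y' : Plane,
        ENNReal.ofReal (heatK s₁ (a - y)) * ENNReal.ofReal (heatK s₂ (y - y')) *
          ENNReal.ofReal (heatK s₃ (y' - c)))
        ≤ ∫⁻ y : Plane, ∫⁻ y' : Plane,
          ENNReal.ofReal (heatK s₁ (a - y)) * B * ENNReal.ofReal (heatK s₃ (y' - c)) := by
      apply lintegral_mono; intro y; apply lintegral_mono; intro y'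
      exact mul_le_mul_left (mul_le_mul_right
        (ENNReal.ofReal_le_ofReal (heatK_le' ht hm _)) _) _
    refine le_trans step1 (le_of_eq ?_)
    have inner : ∀ y : Plane, (∫⁻ y' : Plane,
        ENNReal.ofReal (heatK s₁ (a - y)) * B * ENNReal.ofReal (heatK s₃ (y' - c)))
        = ENNReal.ofReal (heatK s₁ (a - y)) * B := by
      intro y
      rw [lintegral_const_mul' _ _ (ENNReal.mul_ne_top ENNReal.ofReal_ne_top hBne),
        lintegral_heatK h₃ c, mul_one]
    simp_rw [inner]
    rw [lintegral_mul_const' _ _ hBne, lintegral_heatK' h₁ a, one_mul]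
  · -- bound the third kernel
    have step1 : (∫⁻ y : Plane, ∫⁻ y' : Plane,
        ENNReal.ofReal (heatK s₁ (a - y)) * ENNReal.ofReal (heatK s₂ (y - y')) *
          ENNReal.ofReal (heatK s₃ (y' - c)))
        ≤ ∫⁻ y : Plane, ∫⁻ y' : Plane,
          ENNReal.ofReal (heatK s₁ (a - y)) * ENNReal.ofReal (heatK s₂ (y - y')) * B := by
      apply lintegral_mono; intro y; apply lintegral_mono; intro y'
      exact mul_le_mul_right (ENNReal.ofReal_le_ofReal (heatK_le' ht hm _)) _
    refine le_trans step1 (le_of_eq ?_)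
    have inner : ∀ y : Plane, (∫⁻ y' : Plane,
        ENNReal.ofReal (heatK s₁ (a - y)) * ENNReal.ofReal (heatK s₂ (y - y')) * B)
        = ENNReal.ofReal (heatK s₁ (a - y)) * B := by
      intro y
      simp_rw [mul_comm _ B, ← mul_assoc]
      rw [lintegral_const_mul' _ _ (ENNReal.mul_ne_top hBne ENNReal.ofReal_ne_top)]
      rw [lintegral_heatK' h₂ y, mul_one, mul_comm]
    simp_rw [inner]
    rw [lintegral_mul_const' _ _ hBne, lintegral_heatK' h₁ a, one_mul]
end Helpers

/-- For every `θ̄ ∈ ℝ`, `t > 0`, and distinct points `x₁ ≠ x₂`, `x₁' ≠ x₂'` in `ℝ²`, the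
quantity `W^{θ̄}(t,(x₁,x₂),(x₁',x₂'))` is finite. -/


theorem Wker_finite (θ t : ℝ) (ht : 0 < t) (x₁ x₂ x₁' x₂' : Plane)
    (hx : x₁ ≠ x₂) (hx' : x₁' ≠ x₂') :
    Wker θ t x₁ x₂ x₁' x₂' < ⊤ := by
  have hπ := Real.pi_pos
  have hd : (0:ℝ) < ‖x₁ - x₂‖ ^ 2 := by
    have h0 : (0:ℝ) < ‖x₁ - x₂‖ := norm_pos_iff.2 (sub_ne_zero.2 hx)
    positivity
  have hd' : (0:ℝ) < ‖x₁' - x₂'‖ ^ 2 := by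
    have h0 : (0:ℝ) < ‖x₁' - x₂'‖ := norm_pos_iff.2 (sub_ne_zero.2 hx')
    positivity
  set K₀ : ℝ := 8 / (Real.pi * ‖x₁ - x₂‖ ^ 2) * (4 * Real.pi) * (8 / (Real.pi * ‖x₁' - x₂'‖ ^ 2))
    with hK₀
  have hK₀0 : 0 ≤ K₀ := by positivity
  set M : ℝ := Real.exp (|θ| * t) * (Real.exp 4 + Real.exp 5 * Real.Gamma (t + 1)) with hM
  have hM0 : 0 ≤ M := by
    have := Real.Gamma_pos_of_pos (show (0:ℝ) < t + 1 by linarith)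
    positivity
  set C : ℝ≥0∞ := ENNReal.ofReal (K₀ * M) * ENNReal.ofReal (3 / (Real.pi * t)) with hC
  have hCne : C ≠ ⊤ := ENNReal.mul_ne_top ENNReal.ofReal_ne_top ENNReal.ofReal_ne_top
  have key : ∀ u ∈ Ioo (0:ℝ) t, ∀ u' ∈ Ioo (0:ℝ) (t - u),
      (∫⁻ y : Plane, ∫⁻ y' : Plane,
        ENNReal.ofReal (heatK u (x₁ - y) * heatK u (x₂ - y) *
          (4 * Real.pi * jfn θ u' * heatK (u' / 2) (y - y')) *
          (heatK (t - u - u') (y' - x₁') * heatK (t - u - u') (y' - x₂')))) ≤ C := by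
    intro u hu u' hu'
    have hu0 : 0 < u := hu.1
    have hu'0 : 0 < u' := hu'.1
    have hu'' : 0 < t - u - u' := by have := hu'.2; linarith
    have hu't : u' < t := by have := hu'.2; have := hu.1; linarith
    have hj0 := jfn_nonneg θ u'
    have hjM : jfn θ u' ≤ M := jfn_le ht hu'0 hu't
    -- pointwise bound
    have hpoint : ∀ y y' : Plane,
        heatK u (x₁ - y) * heatK u (x₂ - y) *
          (4 * Real.pi * jfn θ u' * heatK (u' / 2) (y - y')) *
          (heatK (t - u - u') (y' - x₁') * heatK (t - u - u') (y' - x₂'))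
        ≤ (K₀ * jfn θ u') * (heatK (2 * u) (x₁ - y) * heatK (u' / 2) (y - y') *
            heatK (2 * (t - u - u')) (y' - x₁')) := by
      intro y y'
      have hA : heatK u (x₁ - y) * heatK u (x₂ - y)
          ≤ 8 / (Real.pi * ‖x₁ - x₂‖ ^ 2) * heatK (2 * u) (x₁ - y) := by
        have hne : x₁ - y ≠ x₂ - y := fun h => hx (by
          have := congrArg (fun z => z + y) h
          simpa using this)
        have := heat_prod_le hu0 hne
        rwa [sub_sub_sub_cancel_right] at this
      have hCC : heatK (t - u - u') (y' - x₁') * heatK (t - u - u') (y' - x₂')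
          ≤ 8 / (Real.pi * ‖x₁' - x₂'‖ ^ 2) * heatK (2 * (t - u - u')) (y' - x₁') := by
        have hne : y' - x₁' ≠ y' - x₂' := fun h => hx' (by
          have := sub_right_injective h
          exact this)
        have h2 := heat_prod_le hu'' hne
        rwa [show y' - x₁' - (y' - x₂') = x₂' - x₁' by abel, norm_sub_rev] at h2
      have hmid0 : 0 ≤ 4 * Real.pi * jfn θ u' * heatK (u' / 2) (y - y') := by
        have := heatK_nonneg (show (0:ℝ) < u'/2 by linarith) (y - y')
        positivity
      have h1nn := heatK_nonneg hu0 (x₁ - y)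
      have h2nn := heatK_nonneg hu0 (x₂ - y)
      have h3nn := heatK_nonneg hu'' (y' - x₁')
      have h4nn := heatK_nonneg hu'' (y' - x₂')
      have h5nn := heatK_nonneg (show (0:ℝ) < 2*u by linarith) (x₁ - y)
      calc heatK u (x₁ - y) * heatK u (x₂ - y) *
            (4 * Real.pi * jfn θ u' * heatK (u' / 2) (y - y')) *
            (heatK (t - u - u') (y' - x₁') * heatK (t - u - u') (y' - x₂'))
          ≤ (8 / (Real.pi * ‖x₁ - x₂‖ ^ 2) * heatK (2 * u) (x₁ - y)) *
            (4 * Real.pi * jfn θ u' * heatK (u' / 2) (y - y')) *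
            (8 / (Real.pi * ‖x₁' - x₂'‖ ^ 2) * heatK (2 * (t - u - u')) (y' - x₁')) := by
            apply mul_le_mul
            · exact mul_le_mul_of_nonneg_right hA hmid0
            · exact hCC
            · exact mul_nonneg h3nn h4nn
            · apply mul_nonneg (by positivity)
              exact hmid0
        _ = (K₀ * jfn θ u') * (heatK (2 * u) (x₁ - y) * heatK (u' / 2) (y - y') *
            heatK (2 * (t - u - u')) (y' - x₁')) := by
            rw [hK₀]; ring
    -- integrate the bound
    have hmax : t/6 ≤ 2 * u ∨ t/6 ≤ u'/2 ∨ t/6 ≤ 2 * (t - u - u') := by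
      by_contra hcon
      push_neg at hcon
      obtain ⟨a1, a2, a3⟩ := hcon
      linarith
    calc (∫⁻ y : Plane, ∫⁻ y' : Plane,
        ENNReal.ofReal (heatK u (x₁ - y) * heatK u (x₂ - y) *
          (4 * Real.pi * jfn θ u' * heatK (u' / 2) (y - y')) *
          (heatK (t - u - u') (y' - x₁') * heatK (t - u - u') (y' - x₂'))))
        ≤ ∫⁻ y : Plane, ∫⁻ y' : Plane,
          ENNReal.ofReal (K₀ * jfn θ u') * (ENNReal.ofReal (heatK (2 * u) (x₁ - y)) *
            ENNReal.ofReal (heatK (u' / 2) (y - y')) *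
            ENNReal.ofReal (heatK (2 * (t - u - u')) (y' - x₁'))) := by
          apply lintegral_mono; intro y; apply lintegral_mono; intro y'
          have h5nn := heatK_nonneg (show (0:ℝ) < 2*u by linarith) (x₁ - y)
          have h6nn := heatK_nonneg (show (0:ℝ) < u'/2 by linarith) (y - y')
          have h7nn := heatK_nonneg (show (0:ℝ) < 2*(t-u-u') by linarith) (y' - x₁')
          calc ENNReal.ofReal (heatK u (x₁ - y) * heatK u (x₂ - y) *
              (4 * Real.pi * jfn θ u' * heatK (u' / 2) (y - y')) *
              (heatK (t - u - u') (y' - x₁') * heatK (t - u - u') (y' - x₂')))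
              ≤ ENNReal.ofReal ((K₀ * jfn θ u') * (heatK (2 * u) (x₁ - y) *
                heatK (u' / 2) (y - y') * heatK (2 * (t - u - u')) (y' - x₁'))) :=
                ENNReal.ofReal_le_ofReal (hpoint y y')
            _ = ENNReal.ofReal (K₀ * jfn θ u') * (ENNReal.ofReal (heatK (2 * u) (x₁ - y)) *
                ENNReal.ofReal (heatK (u' / 2) (y - y')) *
                ENNReal.ofReal (heatK (2 * (t - u - u')) (y' - x₁'))) := by
                rw [ENNReal.ofReal_mul (mul_nonneg hK₀0 hj0),
                  ENNReal.ofReal_mul (mul_nonneg h5nn h6nn), ENNReal.ofReal_mul h5nn]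
      _ = ENNReal.ofReal (K₀ * jfn θ u') * ∫⁻ y : Plane, ∫⁻ y' : Plane,
            ENNReal.ofReal (heatK (2 * u) (x₁ - y)) *
            ENNReal.ofReal (heatK (u' / 2) (y - y')) *
            ENNReal.ofReal (heatK (2 * (t - u - u')) (y' - x₁')) := by
          simp_rw [lintegral_const_mul' (ENNReal.ofReal (K₀ * jfn θ u')) _ ENNReal.ofReal_ne_top]
      _ ≤ ENNReal.ofReal (K₀ * jfn θ u') * ENNReal.ofReal (3 / (Real.pi * t)) := by
          apply mul_le_mul_right
          exact double_le ht (by linarith) (by linarith) (by linarith) hmax x₁ x₁'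
      _ ≤ C := by
          rw [hC]
          apply mul_le_mul_left
          exact ENNReal.ofReal_le_ofReal (mul_le_mul_of_nonneg_left hjM hK₀0)
  -- conclude
  have hbound : Wker θ t x₁ x₂ x₁' x₂' ≤ C * ENNReal.ofReal t * ENNReal.ofReal t := by
    rw [Wker]
    calc (∫⁻ u in Ioo (0:ℝ) t, ∫⁻ u' in Ioo (0:ℝ) (t - u), ∫⁻ y : Plane, ∫⁻ y' : Plane,
        ENNReal.ofReal (heatK u (x₁ - y) * heatK u (x₂ - y) *
          (4 * Real.pi * jfn θ u' * heatK (u' / 2) (y - y')) *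
          (heatK (t - u - u') (y' - x₁') * heatK (t - u - u') (y' - x₂'))))
        ≤ ∫⁻ u in Ioo (0:ℝ) t, C * ENNReal.ofReal t := by
          apply setLIntegral_mono' measurableSet_Ioo
          intro u hu
          calc (∫⁻ u' in Ioo (0:ℝ) (t - u), ∫⁻ y : Plane, ∫⁻ y' : Plane,
              ENNReal.ofReal (heatK u (x₁ - y) * heatK u (x₂ - y) *
                (4 * Real.pi * jfn θ u' * heatK (u' / 2) (y - y')) *
                (heatK (t - u - u') (y' - x₁') * heatK (t - u - u') (y' - x₂'))))
              ≤ ∫⁻ _u' in Ioo (0:ℝ) (t - u), C := by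
                apply setLIntegral_mono' measurableSet_Ioo
                intro u' hu'
                exact key u hu u' hu'
            _ = C * volume (Ioo (0:ℝ) (t - u)) := setLIntegral_const _ _
            _ ≤ C * ENNReal.ofReal t := by
                apply mul_le_mul_right
                rw [Real.volume_Ioo]
                apply ENNReal.ofReal_le_ofReal
                have := hu.1
                linarith
      _ = C * ENNReal.ofReal t * volume (Ioo (0:ℝ) t) := setLIntegral_const _ _
      _ ≤ C * ENNReal.ofReal t * ENNReal.ofReal t := by
          apply mul_le_mul_right
          rw [Real.volume_Ioo]
          apply ENNReal.ofReal_le_ofReal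
          linarith
  calc Wker θ t x₁ x₂ x₁' x₂' ≤ C * ENNReal.ofReal t * ENNReal.ofReal t := hbound
    _ < ⊤ := by
        apply ENNReal.mul_lt_top
        · exact ENNReal.mul_lt_top hCne.lt_top ENNReal.ofReal_lt_top
        · exact ENNReal.ofReal_lt_top

end
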